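/- Let C(n) be the number of coprime permutations of {1,…,n}, and let C_0(n) be the number of bijections f from the set {1,3,…,2n−1} of the first n odd positive integers to {1,…,n} such that gcd(i, f(i)) = 1 for each odd i < 2n. Then C(2n) = C_0(n)². -/

import Mathlib

/-- The number of coprime permutations of `{1,…,n}`: permutations `σ` of `{1,…,n}`
(encoded as permutations of `Fin n` via `j ↦ j+1`) with `gcd(j, σ j) = 1` for all `j`. -/
def C (n : ℕ) : ℕ :=
  Fintype.card {σ : Equiv.Perm (Fin n) // ∀ j, Nat.gcd (j.val + 1) ((σ j).val + 1) = 1}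

/-- The number of coprime bijections from the first `n` odd numbers `{1,3,…,2n-1}`
(encoded as `i ↦ 2i+1`) to `{1,…,n}` (encoded as `j ↦ j+1`). -/
def C0 (n : ℕ) : ℕ :=
  Fintype.card {f : Equiv.Perm (Fin n) // ∀ i, Nat.gcd (2 * i.val + 1) ((f i).val + 1) = 1}

lemma odd_cop_two (x : ℕ) : Nat.Coprime (2*x+1) 2 :=
  Nat.coprime_two_right.mpr ⟨x, by ring⟩

def interleave (n : ℕ) : (Fin n ⊕ Fin n) ≃ Fin (2 * n) where
  toFun x := Sum.elim (fun i => ⟨2 * i.val, by omega⟩) (fun i => ⟨2 * i.val + 1, by omega⟩) x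
  invFun j := if j.val % 2 = 0 then Sum.inl ⟨j.val / 2, by omega⟩ else Sum.inr ⟨j.val / 2, by omega⟩
  left_inv x := by
    rcases x with i | i <;> simp only [Sum.elim_inl, Sum.elim_inr]
    · simp only [show 2 * i.val % 2 = 0 by omega, ↓reduceIte]; congr 1; exact Fin.ext (by simp only [Fin.val_mk]; omega)
    · simp only [show ¬((2 * i.val + 1) % 2 = 0) by omega, ↓reduceIte]; congr 1; exact Fin.ext (by simp only [Fin.val_mk]; omega)
  right_inv j := by
    dsimp only
    by_cases h : j.val % 2 = 0
    · rw [if_pos h]; exact Fin.ext (by simp; omega)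
    · rw [if_neg h]; exact Fin.ext (by simp; omega)

def Phi (n : ℕ) (f g : Equiv.Perm (Fin n)) : Equiv.Perm (Fin (2 * n)) :=
  (interleave n).permCongr ((f.sumCongr g).trans (Equiv.sumComm _ _))

lemma Phi_even (n : ℕ) (f g : Equiv.Perm (Fin n)) (i : Fin n) (h : 2 * i.val < 2 * n) :
    Phi n f g ⟨2 * i.val, h⟩ = ⟨2 * (f i).val + 1, by omega⟩ := by
  have h1 : (interleave n).symm ⟨2 * i.val, h⟩ = Sum.inl i := by
    rw [Equiv.symm_apply_eq]; rfl
  simp [Phi, Equiv.permCongr_apply, h1]; rfl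

lemma Phi_odd (n : ℕ) (f g : Equiv.Perm (Fin n)) (i : Fin n) (h : 2 * i.val + 1 < 2 * n) :
    Phi n f g ⟨2 * i.val + 1, h⟩ = ⟨2 * (g i).val, by omega⟩ := by
  have h1 : (interleave n).symm ⟨2 * i.val + 1, h⟩ = Sum.inr i := by
    rw [Equiv.symm_apply_eq]; rfl
  simp [Phi, Equiv.permCongr_apply, h1]; rfl

theorem stmt_4 (n : ℕ) : C (2 * n) = C0 n ^ 2 := by
  classical
  -- A: coprime maps on even-index positions (odd labels to even labels)
  set A := {f : Equiv.Perm (Fin n) // ∀ i, Nat.gcd (2 * i.val + 1) (2 * (f i).val + 2) = 1} with hA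
  set B := {g : Equiv.Perm (Fin n) // ∀ i, Nat.gcd (2 * i.val + 2) (2 * (g i).val + 1) = 1} with hB
  set S := {σ : Equiv.Perm (Fin (2 * n)) // ∀ j, Nat.gcd (j.val + 1) ((σ j).val + 1) = 1} with hS
  -- the map Ψ : A × B → S
  have Psi_prop : ∀ (f : A) (g : B) (j : Fin (2 * n)),
      Nat.gcd (j.val + 1) (((Phi n f.1 g.1) j).val + 1) = 1 := by
    rintro ⟨f, hf⟩ ⟨g, hg⟩ j
    by_cases h : j.val % 2 = 0
    · have hj : j = ⟨2 * (j.val / 2), by omega⟩ := Fin.ext (by simp only [Fin.val_mk]; omega)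
      rw [hj]
      rw [Phi_even n f g ⟨j.val / 2, by omega⟩ (by simp only [Fin.val_mk]; omega)]
      simp only [Fin.val_mk]
      have := hf ⟨j.val / 2, by omega⟩
      simpa using this
    · have hj : j = ⟨2 * (j.val / 2) + 1, by omega⟩ := Fin.ext (by simp only [Fin.val_mk]; omega)
      rw [hj]
      rw [Phi_odd n f g ⟨j.val / 2, by omega⟩ (by simp only [Fin.val_mk]; omega)]
      simp only [Fin.val_mk]
      have := hg ⟨j.val / 2, by omega⟩
      have h2 : Nat.gcd (2 * (j.val / 2) + 1 + 1) (2 * (g ⟨j.val / 2, by omega⟩).val + 1) = 1 := by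
        simpa using this
      exact h2
  set Psi : A × B → S := fun p => ⟨Phi n p.1.1 p.2.1, Psi_prop p.1 p.2⟩ with hPsi
  have hinj : Function.Injective Psi := by
    rintro ⟨⟨f, hf⟩, ⟨g, hg⟩⟩ ⟨⟨f', hf'⟩, ⟨g', hg'⟩⟩ h
    have h0 : Phi n f g = Phi n f' g' := congrArg Subtype.val h
    have hfe : f = f' := by
      ext i
      have h1 := congrArg (fun σ : Equiv.Perm (Fin (2*n)) => σ ⟨2 * i.val, by omega⟩) h0
      rw [Phi_even n f g i (by omega), Phi_even n f' g' i (by omega)] at h1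
      have := congrArg Fin.val h1
      simp only [Fin.val_mk] at this
      omega
    have hge : g = g' := by
      ext i
      have h1 := congrArg (fun σ : Equiv.Perm (Fin (2*n)) => σ ⟨2 * i.val + 1, by omega⟩) h0
      rw [Phi_odd n f g i (by omega), Phi_odd n f' g' i (by omega)] at h1
      have := congrArg Fin.val h1
      simp only [Fin.val_mk] at this
      omega
    subst hfe; subst hge
    rfl
  have hsurj : Function.Surjective Psi := by
    rintro ⟨σ, hσ⟩
    -- even labels (odd positions) go to odd labels (even positions)
    have h1 : ∀ i : Fin n, (σ ⟨2 * i.val + 1, by omega⟩).val % 2 = 0 := by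
      intro i
      by_contra h
      have hd : 2 ∣ Nat.gcd ((2 * i.val + 1) + 1) ((σ ⟨2 * i.val + 1, by omega⟩).val + 1) :=
        Nat.dvd_gcd (by omega) (by omega)
      have := hσ ⟨2 * i.val + 1, by omega⟩
      simp only [Fin.val_mk] at this
      rw [this] at hd
      omega
    -- define b
    set b : Fin n → Fin n := fun i => ⟨(σ ⟨2 * i.val + 1, by omega⟩).val / 2, by
      have := (σ ⟨2 * i.val + 1, by omega⟩).isLt; omega⟩ with hb
    have hbinj : Function.Injective b := by
      intro i i' hii
      have e1 := h1 i
      have e2 := h1 i'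
      have := congrArg Fin.val hii
      simp only [hb, Fin.val_mk] at this
      have hv : σ ⟨2 * i.val + 1, by omega⟩ = σ ⟨2 * i'.val + 1, by omega⟩ :=
        Fin.ext (by omega)
      have := σ.injective hv
      have := congrArg Fin.val this
      simp only [Fin.val_mk] at this
      exact Fin.ext (by omega)
    have hbbij : Function.Bijective b := ⟨hbinj, Finite.surjective_of_injective hbinj⟩
    -- odd labels (even positions) go to even labels (odd positions)
    have h2 : ∀ i : Fin n, (σ ⟨2 * i.val, by omega⟩).val % 2 = 1 := by
      intro i
      by_contra h
      have heven : (σ ⟨2 * i.val, by omega⟩).val % 2 = 0 := by omega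
      obtain ⟨i', hi'⟩ := hbbij.2 ⟨(σ ⟨2 * i.val, by omega⟩).val / 2, by
        have := (σ ⟨2 * i.val, by omega⟩).isLt; omega⟩
      have e1 := h1 i'
      have := congrArg Fin.val hi'
      simp only [hb, Fin.val_mk] at this
      have hv : σ ⟨2 * i'.val + 1, by omega⟩ = σ ⟨2 * i.val, by omega⟩ :=
        Fin.ext (by omega)
      have := σ.injective hv
      have := congrArg Fin.val this
      simp only [Fin.val_mk] at this
      omega
    set a : Fin n → Fin n := fun i => ⟨(σ ⟨2 * i.val, by omega⟩).val / 2, by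
      have := (σ ⟨2 * i.val, by omega⟩).isLt; have := h2 i; omega⟩ with ha
    have hainj : Function.Injective a := by
      intro i i' hii
      have e1 := h2 i
      have e2 := h2 i'
      have := congrArg Fin.val hii
      simp only [ha, Fin.val_mk] at this
      have hv : σ ⟨2 * i.val, by omega⟩ = σ ⟨2 * i'.val, by omega⟩ :=
        Fin.ext (by omega)
      have := σ.injective hv
      have := congrArg Fin.val this
      simp only [Fin.val_mk] at this
      exact Fin.ext (by omega)
    have habij : Function.Bijective a := ⟨hainj, Finite.surjective_of_injective hainj⟩
    set fE : Equiv.Perm (Fin n) := Equiv.ofBijective a habij with hfE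
    set gE : Equiv.Perm (Fin n) := Equiv.ofBijective b hbbij with hgE
    have hfEP : ∀ i, Nat.gcd (2 * i.val + 1) (2 * (fE i).val + 2) = 1 := by
      intro i
      have hval : (fE i).val = (σ ⟨2 * i.val, by omega⟩).val / 2 := rfl
      have := hσ ⟨2 * i.val, by omega⟩
      simp only [Fin.val_mk] at this
      have hodd := h2 i
      rw [hval]
      have : Nat.gcd (2 * i.val + 1) ((σ ⟨2 * i.val, by omega⟩).val + 1) = 1 := this
      convert this using 2
      omega
    have hgEP : ∀ i, Nat.gcd (2 * i.val + 2) (2 * (gE i).val + 1) = 1 := by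
      intro i
      have hval : (gE i).val = (σ ⟨2 * i.val + 1, by omega⟩).val / 2 := rfl
      have := hσ ⟨2 * i.val + 1, by omega⟩
      simp only [Fin.val_mk] at this
      have heven := h1 i
      rw [hval]
      convert this using 2
      omega
    refine ⟨(⟨fE, hfEP⟩, ⟨gE, hgEP⟩), ?_⟩
    apply Subtype.ext
    show Phi n fE gE = σ
    ext j
    by_cases h : j.val % 2 = 0
    · have hj : j = ⟨2 * (j.val / 2), by omega⟩ := Fin.ext (by simp only [Fin.val_mk]; omega)
      rw [hj, Phi_even n fE gE ⟨j.val / 2, by omega⟩ (by simp only [Fin.val_mk]; omega)]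
      have hval : (fE ⟨j.val / 2, by omega⟩).val
          = (σ ⟨2 * (j.val / 2), by omega⟩).val / 2 := rfl
      have hodd := h2 ⟨j.val / 2, by omega⟩
      simp only [Fin.val_mk] at hodd
      rw [Fin.val_mk, hval]; omega
    · have hj : j = ⟨2 * (j.val / 2) + 1, by omega⟩ := Fin.ext (by simp only [Fin.val_mk]; omega)
      rw [hj, Phi_odd n fE gE ⟨j.val / 2, by omega⟩ (by simp only [Fin.val_mk]; omega)]
      have hval : (gE ⟨j.val / 2, by omega⟩).val
          = (σ ⟨2 * (j.val / 2) + 1, by omega⟩).val / 2 := rfl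
      have heven := h1 ⟨j.val / 2, by omega⟩
      simp only [Fin.val_mk] at heven
      rw [Fin.val_mk, hval]; omega
  -- cardinalities
  have hcard : Fintype.card (A × B) = Fintype.card S :=
    Fintype.card_of_bijective ⟨hinj, hsurj⟩
  have hAcard : Fintype.card A = C0 n := by
    apply Fintype.card_congr
    apply Equiv.subtypeEquivRight
    intro f
    constructor
    · intro h i
      have := h i
      have h2 : Nat.Coprime (2 * i.val + 1) (2 * ((f i).val + 1)) := by
        have : 2 * ((f i).val + 1) = 2 * (f i).val + 2 := by ring
        rw [this]; exact h i
      exact h2.coprime_dvd_right (dvd_mul_left _ 2)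
    · intro h i
      have hc : Nat.Coprime (2 * i.val + 1) ((f i).val + 1) := h i
      have h2 : Nat.Coprime (2 * i.val + 1) 2 := odd_cop_two i.val
      have := Nat.Coprime.mul_right h2 hc
      have h3 : 2 * ((f i).val + 1) = 2 * (f i).val + 2 := by ring
      rw [h3] at this
      exact this
  have hBcard : Fintype.card B = C0 n := by
    apply Fintype.card_congr
    refine ⟨fun g => ⟨g.1⁻¹, ?_⟩, fun f => ⟨f.1⁻¹, ?_⟩, ?_, ?_⟩
    · intro i
      obtain ⟨g, hg⟩ := g
      have := hg (g⁻¹ i)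
      rw [show g (g⁻¹ i) = i from g.apply_symm_apply i] at this
      have hc : Nat.Coprime (2 * (g⁻¹ i).val + 2) (2 * i.val + 1) := this
      have h2 : Nat.Coprime ((g⁻¹ i).val + 1) (2 * i.val + 1) := by
        refine Nat.Coprime.coprime_dvd_left ?_ hc
        have : 2 * (g⁻¹ i).val + 2 = 2 * ((g⁻¹ i).val + 1) := by ring
        rw [this]; exact dvd_mul_left _ 2
      exact h2.symm
    · intro i
      obtain ⟨f, hf⟩ := f
      have := hf (f⁻¹ i)
      rw [show f (f⁻¹ i) = i from f.apply_symm_apply i] at this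
      have hc : Nat.Coprime (2 * (f⁻¹ i).val + 1) (i.val + 1) := this
      have h2 : Nat.Coprime (2 * (f⁻¹ i).val + 1) 2 := odd_cop_two _
      have h3 := Nat.Coprime.mul_right h2 hc
      have h4 : 2 * (i.val + 1) = 2 * i.val + 2 := by ring
      rw [h4] at h3
      exact h3.symm
    · intro g; apply Subtype.ext; exact inv_inv _
    · intro f; apply Subtype.ext; exact inv_inv _
  have : C (2 * n) = Fintype.card S := rfl
  rw [this, ← hcard, Fintype.card_prod, hAcard, hBcard, sq]
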